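/- For 0 < |q| < 1/√2, the cumulative distribution function F(x) = ∫_{-∞}^{x} pdf(p) dp, with pdf(p) = e^{-p²}(2p² + 2q² - 1)/(2√π q²), is not monotone nondecreasing on ℝ: there exist x₁ < x₂ with F(x₁) > F(x₂). -/

import Mathlib

noncomputable def pdf (q p : ℝ) : ℝ :=
  Real.exp (-p^2) * (2*p^2 + 2*q^2 - 1) / (2 * Real.sqrt Real.pi * q^2)

noncomputable def F (q x : ℝ) : ℝ := ∫ p in Set.Iic x, pdf q p

open MeasureTheory Real Set

lemma pdf_integrable (q : ℝ) : Integrable (_root_.pdf q) := by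
  have h1 : Integrable (fun p : ℝ => p ^ 2 * rexp (-1 * p ^ 2)) := by
    have := integrable_rpow_mul_exp_neg_mul_sq (b := 1) one_pos (s := 2) (by norm_num)
    apply this.congr
    filter_upwards with p
    rw [show ((2:ℝ) : ℝ) = ((2:ℕ) : ℝ) by norm_num, Real.rpow_natCast]
  have h2 : Integrable (fun p : ℝ => rexp (-1 * p ^ 2)) := integrable_exp_neg_mul_sq one_pos
  have h3 := ((h1.const_mul 2).add (h2.const_mul (2*q^2-1))).div_const
      (2 * Real.sqrt Real.pi * q^2)
  apply h3.congr
  filter_upwards with p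
  simp only [_root_.pdf, Pi.add_apply, neg_one_mul, one_mul]
  ring

theorem stmt_6 (q : ℝ) (hq : q ≠ 0) (hq' : |q| < 1 / Real.sqrt 2) :
    ∃ x₁ x₂ : ℝ, x₁ < x₂ ∧ F q x₁ > F q x₂ := by
  have h2 : (0:ℝ) < Real.sqrt 2 := Real.sqrt_pos.2 (by norm_num)
  have hq2 : q ^ 2 < 1 / 2 := by
    have h := mul_self_lt_mul_self (abs_nonneg q) hq'
    have heq : (1 / Real.sqrt 2) * (1 / Real.sqrt 2) = 1 / 2 := by
      rw [div_mul_div_comm, one_mul, Real.mul_self_sqrt (by norm_num : (0:ℝ) ≤ 2)]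
    rw [heq, abs_mul_abs_self] at h
    nlinarith
  set r := Real.sqrt (1/2 - q^2) with hr
  have hrpos : 0 < r := Real.sqrt_pos.2 (by linarith)
  set a := r / 2 with ha
  have hapos : 0 < a := by positivity
  have hr2 : r ^ 2 = 1/2 - q^2 := Real.sq_sqrt (by linarith)
  have ha2 : a ^ 2 < 1/2 - q^2 := by
    have h4 : a ^ 2 = r ^ 2 / 4 := by rw [ha]; ring
    nlinarith
  have hC : 0 < 2 * Real.sqrt Real.pi * q ^ 2 := by
    have hπ : 0 < Real.sqrt Real.pi := Real.sqrt_pos.2 Real.pi_pos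
    positivity
  set c : ℝ := rexp (-a^2) * (2*a^2 + 2*q^2 - 1) / (2 * Real.sqrt Real.pi * q^2) with hc
  have hcneg : c < 0 := by
    apply div_neg_of_neg_of_pos _ hC
    apply mul_neg_of_pos_of_neg (Real.exp_pos _)
    nlinarith
  have hbound : ∀ p ∈ Ioc (0:ℝ) a, _root_.pdf q p ≤ c := by
    intro p hp
    have hp1 : 0 < p := hp.1
    have hp2 : p ≤ a := hp.2
    have hpa : p ^ 2 ≤ a ^ 2 := by nlinarith
    have e1 : rexp (-a^2) ≤ rexp (-p^2) := Real.exp_le_exp.2 (by linarith)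
    have step1 : rexp (-p^2) * (2*p^2 + 2*q^2 - 1) ≤ rexp (-p^2) * (2*a^2 + 2*q^2 - 1) :=
      mul_le_mul_of_nonneg_left (by linarith) (Real.exp_pos _).le
    have step2 : rexp (-p^2) * (2*a^2 + 2*q^2 - 1) ≤ rexp (-a^2) * (2*a^2 + 2*q^2 - 1) :=
      mul_le_mul_of_nonpos_right e1 (by nlinarith)
    show rexp (-p^2) * (2*p^2 + 2*q^2 - 1) / (2 * Real.sqrt Real.pi * q^2) ≤ c
    rw [hc]
    exact (div_le_div_iff_of_pos_right hC).2 (by linarith)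
  have hIOc : IntegrableOn (_root_.pdf q) (Ioc 0 a) := (pdf_integrable q).integrableOn
  have hconstInt : IntegrableOn (fun _ : ℝ => c) (Ioc (0:ℝ) a) :=
    integrableOn_const (by simp [Real.volume_Ioc]) (by simp)
  have hint : ∫ p in Ioc (0:ℝ) a, _root_.pdf q p ≤ ∫ _p in Ioc (0:ℝ) a, c :=
    setIntegral_mono_on hIOc hconstInt measurableSet_Ioc hbound
  have hconst : ∫ _p in Ioc (0:ℝ) a, c = a * c := by
    rw [setIntegral_const, measureReal_def, Real.volume_Ioc, smul_eq_mul,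
      ENNReal.toReal_ofReal (by linarith)]
    ring
  have hIneg : ∫ p in Ioc (0:ℝ) a, _root_.pdf q p < 0 := by
    have hac : a * c < 0 := mul_neg_of_pos_of_neg hapos hcneg
    rw [hconst] at hint
    linarith
  have hsplit : F q a = F q 0 + ∫ p in Ioc (0:ℝ) a, _root_.pdf q p := by
    rw [F, F, ← setIntegral_union (Iic_disjoint_Ioc le_rfl) measurableSet_Ioc
      (pdf_integrable q).integrableOn (pdf_integrable q).integrableOn,
      Iic_union_Ioc_eq_Iic hapos.le]
  exact ⟨0, a, hapos, by rw [gt_iff_lt, hsplit]; linarith⟩
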